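/- arXiv:0710.5894 — 2 statements merged into one kernel-verified Lean document; each statement's English description precedes it below -/
import Mathlib

section
/- Let S ⊆ {1, 2, 3, ...} be a measurable set of positive integers with density δ ∈ [0, 1], i.e., lim_{x→∞} #(S ∩ [1,x])/x = δ. Then the infinite product F(z) = ∏_{t ∈ S} (1 − z²/t²) converges locally uniformly on ℂ and defines an entire function of exponential type at most πδ. -/
open Filter Real

/-- `Λ` is a measurable set of positive integers with density `δ`. -/
def HasDensity (Λ : Set ℕ) (δ : ℝ) : Prop :=
  Tendsto (fun x : ℝ => ({m ∈ Λ | 1 ≤ m ∧ (m : ℝ) ≤ x}.ncard : ℝ) / x) atTop (nhds δ)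

lemma aux_summable_base : Summable (fun n : ℕ => 1 / ((n:ℝ)+1)^2) := by
  have := (summable_nat_add_iff (f := fun n : ℕ => 1 / (n:ℝ)^2) 1).mpr
    (Real.summable_one_div_nat_pow.mpr one_lt_two)
  simpa using this

lemma aux_summable_shift {a : ℝ} (ha : 0 ≤ a) :
    Summable (fun n : ℕ => Real.log (1 + a / ((n:ℝ)+1)^2)) := by
  have hpos : ∀ n : ℕ, (0:ℝ) < ((n:ℝ)+1)^2 := fun n => by positivity
  apply Summable.of_nonneg_of_le (fun n => Real.log_nonneg (by
    nlinarith [div_nonneg ha (hpos n).le])) (fun n => ?_) (aux_summable_base.mul_left a)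
  · have h1 : Real.log (1 + a / ((n:ℝ)+1)^2) ≤ (1 + a / ((n:ℝ)+1)^2) - 1 :=
      Real.log_le_sub_one_of_pos (by positivity)
    have h2 : a / ((n:ℝ)+1)^2 = a * (1 / ((n:ℝ)+1)^2) := by ring
    linarith [h2 ▸ h1]

lemma aux_sinh_le {x : ℝ} : 0 ≤ x → Real.sinh x ≤ x * Real.exp x := by
  intro _
  have h1 : Real.exp (-x) * Real.exp (-x) = Real.exp (-(2*x)) := by
    rw [← Real.exp_add]; ring_nf
  have h2 : Real.exp x * Real.exp (-x) = 1 := by rw [← Real.exp_add]; simp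
  have h3 := Real.add_one_le_exp (-(2*x))
  have h4 := Real.exp_pos x
  have h5 := Real.exp_pos (-x)
  rw [Real.sinh_eq]
  nlinarith [sq_nonneg (Real.exp (-x))]

lemma aux_KL {s : ℝ} (hs : 0 ≤ s) :
    ∑' n : ℕ, Real.log (1 + s^2 / ((n:ℝ)+1)^2) ≤ π * s := by
  rcases eq_or_lt_of_le hs with h0 | hs
  · simp [← h0]
  -- partial products
  set Q : ℕ → ℝ := fun n => ∏ j ∈ Finset.range n, (1 + s^2 / ((j:ℝ)+1)^2) with hQ
  have hQpos : ∀ n, 0 < Q n := fun n =>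
    Finset.prod_pos (fun j _ => by positivity)
  have hπs : (0:ℝ) < π * s := mul_pos Real.pi_pos hs
  set L : ℝ := Real.sinh (π * s) / (π * s) with hL
  have hLpos : 0 < L := div_pos (by rw [Real.sinh_pos_iff]; exact hπs) hπs
  -- complex Euler product at z = s * I
  have hE := Complex.tendsto_euler_sin_prod (s * Complex.I)
  have hcast : ∀ n : ℕ, (∏ j ∈ Finset.range n,
      ((1:ℂ) - ((s:ℂ) * Complex.I)^2 / ((j:ℂ)+1)^2)) = ((Q n : ℝ) : ℂ) := by
    intro n
    rw [hQ]
    push_cast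
    apply Finset.prod_congr rfl
    intro j _
    have : ((s:ℂ) * Complex.I)^2 = -(s:ℂ)^2 := by
      rw [mul_pow, Complex.I_sq]; ring
    rw [this]
    ring
  have hsin : Complex.sin (π * ((s:ℂ) * Complex.I)) = (Real.sinh (π*s) : ℂ) * Complex.I := by
    rw [show (π : ℂ) * ((s:ℂ) * Complex.I) = ((π * s : ℝ) : ℂ) * Complex.I by push_cast; ring,
      Complex.sin_mul_I, Complex.ofReal_sinh]
  have hE2 : Tendsto (fun n => ((π * s : ℝ):ℂ) * Complex.I * ((Q n : ℝ):ℂ)) atTop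
      (nhds ((Real.sinh (π*s) : ℂ) * Complex.I)) := by
    have := hE
    rw [hsin] at this
    apply this.congr
    intro n
    rw [hcast n]
    push_cast
    ring
  have hne : ((π * s : ℝ):ℂ) * Complex.I ≠ 0 := by
    apply mul_ne_zero _ Complex.I_ne_zero
    exact_mod_cast Complex.ofReal_ne_zero.mpr (ne_of_gt hπs)
  have hE3 : Tendsto (fun n => ((Q n : ℝ):ℂ)) atTop (nhds ((L : ℝ):ℂ)) := by
    have h' := hE2.div_const (((π * s : ℝ):ℂ) * Complex.I)
    have heq1 : ∀ n : ℕ, ((π * s : ℝ):ℂ) * Complex.I * ((Q n : ℝ):ℂ) / (((π * s : ℝ):ℂ) * Complex.I)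
        = ((Q n : ℝ):ℂ) := fun n => mul_div_cancel_left₀ _ hne
    have heq2 : (Real.sinh (π*s) : ℂ) * Complex.I / (((π * s : ℝ):ℂ) * Complex.I) = ((L:ℝ):ℂ) := by
      rw [mul_div_mul_right _ _ Complex.I_ne_zero, hL, Complex.ofReal_div]
    rw [heq2] at h'
    exact h'.congr heq1
  have hQlim : Tendsto Q atTop (nhds L) := by
    have := (Complex.continuous_re.tendsto _).comp hE3
    simpa [Function.comp_def] using this
  -- log of partial products
  have hlogQ : ∀ n, Real.log (Q n) = ∑ j ∈ Finset.range n, Real.log (1 + s^2/((j:ℝ)+1)^2) := by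
    intro n
    rw [hQ, Real.log_prod]
    intro j _
    positivity
  have hsum := aux_summable_shift (a := s^2) (sq_nonneg s)
  have hlim1 : Tendsto (fun n => Real.log (Q n)) atTop
      (nhds (∑' n : ℕ, Real.log (1 + s^2/((n:ℝ)+1)^2))) := by
    apply Tendsto.congr (fun n => (hlogQ n).symm)
    exact hsum.hasSum.tendsto_sum_nat
  have hlim2 : Tendsto (fun n => Real.log (Q n)) atTop (nhds (Real.log L)) :=
    ((Real.continuousAt_log (ne_of_gt hLpos)).tendsto).comp hQlim
  have heq : ∑' n : ℕ, Real.log (1 + s^2/((n:ℝ)+1)^2) = Real.log L :=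
    tendsto_nhds_unique hlim1 hlim2
  rw [heq, Real.log_le_iff_le_exp hLpos, hL, div_le_iff₀ hπs]
  linarith [aux_sinh_le hπs.le, mul_comm (π*s) (Real.exp (π*s))]



lemma aux_count_finite (S : Set ℕ) (x : ℝ) : {m ∈ S | 1 ≤ m ∧ (m:ℝ) ≤ x}.Finite := by
  apply Set.Finite.subset (Set.finite_Icc 1 ⌊x⌋₊)
  rintro m ⟨-, h1, h2⟩
  exact ⟨h1, Nat.le_floor h2⟩

lemma aux_count_le (S : Set ℕ) (n : ℕ) : ({m ∈ S | 1 ≤ m ∧ (m:ℝ) ≤ (n:ℝ)}.ncard : ℝ) ≤ n := by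
  have hsub : {m ∈ S | 1 ≤ m ∧ (m:ℝ) ≤ (n:ℝ)} ⊆ ↑(Finset.Icc 1 n) := by
    rintro m ⟨-, h1, h2⟩
    simp only [Finset.coe_Icc, Set.mem_Icc]
    exact ⟨h1, Nat.cast_le.mp h2⟩
  have := Set.ncard_le_ncard hsub (Finset.finite_toSet _)
  rw [Set.ncard_coe_finset, Nat.card_Icc] at this
  have : {m ∈ S | 1 ≤ m ∧ (m:ℝ) ≤ (n:ℝ)}.ncard ≤ n := by omega
  exact_mod_cast this

lemma aux_density_bound {S : Set ℕ} {δ : ℝ} (hδ0 : 0 ≤ δ) (hd : HasDensity S δ) {β : ℝ}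
    (hβ : δ < β) :
    ∃ K : ℕ, ∀ n : ℕ, ({m ∈ S | 1 ≤ m ∧ (m : ℝ) ≤ (n:ℝ)}.ncard : ℝ) ≤ β * n + K := by
  have hβ0 : 0 < β := lt_of_le_of_lt hδ0 hβ
  have hev : ∀ᶠ x : ℝ in atTop, ({m ∈ S | 1 ≤ m ∧ (m : ℝ) ≤ x}.ncard : ℝ) / x < β :=
    hd.eventually_lt_const hβ
  rw [eventually_atTop] at hev
  obtain ⟨X₀, hX₀⟩ := hev
  refine ⟨⌈X₀⌉₊ + 1, fun n => ?_⟩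
  have hcount := aux_count_le S n
  by_cases hn : X₀ ≤ (n:ℝ) ∧ 1 ≤ n
  · have h := hX₀ (n:ℝ) hn.1
    have hnpos : (0:ℝ) < n := by exact_mod_cast hn.2
    have h2 := (div_lt_iff₀ hnpos).mp h
    have hK : (0:ℝ) ≤ ((⌈X₀⌉₊ + 1 : ℕ) : ℝ) := by positivity
    linarith
  · have hβn : (0:ℝ) ≤ β * n := mul_nonneg hβ0.le (Nat.cast_nonneg n)
    have hnK : (n:ℝ) ≤ ((⌈X₀⌉₊ + 1 : ℕ) : ℝ) := by
      rcases not_and_or.mp hn with hx | h1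
      · push_neg at hx
        have : (n:ℝ) ≤ ⌈X₀⌉₊ := le_trans hx.le (Nat.le_ceil X₀)
        push_cast
        linarith
      · have : n = 0 := by omega
        subst this
        exact_mod_cast Nat.zero_le _
    linarith

lemma aux_sum_bound (S : Set ℕ) (hS : S ⊆ {m : ℕ | 0 < m}) {β : ℝ} (hβ : 0 < β) (K : ℕ)
    (hN : ∀ n : ℕ, ({m ∈ S | 1 ≤ m ∧ (m:ℝ) ≤ (n:ℝ)}.ncard : ℝ) ≤ β * n + K)
    {r : ℝ} (hr : 0 ≤ r) (u : Finset S) :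
    ∑ t ∈ u, Real.log (1 + r^2 / (((t:ℕ)):ℝ)^2)
      ≤ ((K:ℝ)+1) * Real.log (1 + r^2) + π * (β * r) := by
  classical
  set f : ℕ → ℝ := fun m => Real.log (1 + r^2 / (m:ℝ)^2) with hf
  set v : Finset ℕ := u.image Subtype.val with hv
  have hinj : ∀ x ∈ u, ∀ y ∈ u, (x:ℕ) = (y:ℕ) → x = y := fun x _ y _ h => Subtype.ext h
  have hveq : ∑ t ∈ u, f (t:ℕ) = ∑ m ∈ v, f m := (Finset.sum_image hinj).symm
  have hv1 : ∀ m ∈ v, m ∈ S ∧ 1 ≤ m := by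
    intro m hm
    rw [hv, Finset.mem_image] at hm
    obtain ⟨t, -, rfl⟩ := hm
    exact ⟨t.2, hS t.2⟩
  set rank : ℕ → ℕ := fun m => (v.filter (fun x => x ≤ m)).card with hrank
  have hrank1 : ∀ m ∈ v, 1 ≤ rank m := by
    intro m hm
    rw [hrank]
    rw [Nat.one_le_iff_ne_zero, ← Nat.pos_iff_ne_zero, Finset.card_pos]
    exact ⟨m, Finset.mem_filter.mpr ⟨hm, le_rfl⟩⟩
  have hrankN : ∀ m ∈ v, (rank m : ℝ) ≤ β * m + K := by
    intro m hm
    have hsub : ↑(v.filter (fun x => x ≤ m)) ⊆ {m' ∈ S | 1 ≤ m' ∧ (m':ℝ) ≤ (m:ℝ)} := by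
      intro x hx
      simp only [Finset.coe_filter, Set.mem_setOf_eq] at hx
      obtain ⟨hxv, hxm⟩ := hx
      exact ⟨(hv1 x hxv).1, (hv1 x hxv).2, by exact_mod_cast hxm⟩
    have h1 : (v.filter (fun x => x ≤ m)).card ≤ {m' ∈ S | 1 ≤ m' ∧ (m':ℝ) ≤ (m:ℝ)}.ncard := by
      rw [← Set.ncard_coe_finset]
      exact Set.ncard_le_ncard hsub (aux_count_finite S m)
    have h2 : rank m = (v.filter (fun x => x ≤ m)).card := rfl
    rw [h2]
    calc ((v.filter (fun x => x ≤ m)).card : ℝ)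
        ≤ ({m' ∈ S | 1 ≤ m' ∧ (m':ℝ) ≤ (m:ℝ)}.ncard : ℝ) := by exact_mod_cast h1
      _ ≤ β * m + K := hN m
  have hrankmono : ∀ m ∈ v, ∀ m' ∈ v, m < m' → rank m < rank m' := by
    intro m hm m' hm' hlt
    apply Finset.card_lt_card
    have hsub : v.filter (fun x => x ≤ m) ⊆ v.filter (fun x => x ≤ m') :=
      Finset.monotone_filter_right v (fun x _ hx => le_trans hx hlt.le)
    rw [Finset.ssubset_iff_of_subset hsub]
    refine ⟨m', Finset.mem_filter.mpr ⟨hm', le_rfl⟩, fun hc => ?_⟩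
    exact absurd (Finset.mem_filter.mp hc).2 (not_le.mpr hlt)
  set b : ℕ → ℝ := fun k =>
    if K + 1 ≤ k then Real.log (1 + (β*r)^2 / ((k:ℝ) - K)^2) else Real.log (1 + r^2) with hb
  have hb_nonneg : ∀ k, 0 ≤ b k := by
    intro k
    rw [hb]
    by_cases h : K + 1 ≤ k <;> simp only [h, if_true, if_false] <;>
      apply Real.log_nonneg <;> nlinarith [div_nonneg (sq_nonneg (β*r)) (sq_nonneg ((k:ℝ) - K)),
        sq_nonneg r]
  have hfb : ∀ m ∈ v, f m ≤ b (rank m) := by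
    intro m hm
    have hm1 : 1 ≤ m := (hv1 m hm).2
    have hmpos : (0:ℝ) < m := by exact_mod_cast hm1
    rw [hf, hb]
    by_cases hk : K + 1 ≤ rank m
    · simp only [hk, if_true]
      have h1 : (rank m : ℝ) - K ≤ β * m := by linarith [hrankN m hm]
      have h2 : (1:ℝ) ≤ (rank m:ℝ) - K := by
        have : (K:ℝ) + 1 ≤ (rank m : ℝ) := by exact_mod_cast hk
        linarith
      have hd1 : (0:ℝ) < ((rank m:ℝ) - K)^2 := by nlinarith
      have hd2 : ((rank m:ℝ) - K)^2 ≤ (β*m)^2 := by nlinarith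
      have key : r^2 / (m:ℝ)^2 ≤ (β*r)^2 / ((rank m:ℝ) - K)^2 := by
        have he : r^2 / (m:ℝ)^2 = (β*r)^2 / (β*(m:ℝ))^2 := by
          rw [mul_pow, mul_pow]
          rw [mul_div_mul_left _ _ (by positivity : (β:ℝ)^2 ≠ 0)]
        rw [he]
        exact div_le_div_of_nonneg_left (sq_nonneg (β*r)) hd1 hd2
      apply Real.log_le_log (by positivity)
      linarith
    · simp only [hk, if_false]
      have key : r^2 / (m:ℝ)^2 ≤ r^2 := by
        have hm1' : (1:ℝ) ≤ (m:ℝ) := by exact_mod_cast hm1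
        have hm2 : (1:ℝ) ≤ (m:ℝ)^2 := by nlinarith
        calc r^2 / (m:ℝ)^2 ≤ r^2 / 1 := div_le_div_of_nonneg_left (sq_nonneg r) one_pos hm2
          _ = r^2 := div_one _
      apply Real.log_le_log (by positivity)
      linarith
  have hbshift : ∀ k : ℕ, b (k + (K+1)) = Real.log (1 + (β*r)^2 / ((k:ℝ)+1)^2) := by
    intro k
    rw [hb]
    have h : K + 1 ≤ k + (K+1) := by omega
    simp only [h, if_true]
    congr 2
    push_cast
    ring
  have hbsummable : Summable b := by
    rw [← summable_nat_add_iff (K+1)]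
    exact (aux_summable_shift (sq_nonneg (β*r))).congr (fun k => (hbshift k).symm)
  have hchain1 : ∑ m ∈ v, f m ≤ ∑ m ∈ v, b (rank m) := Finset.sum_le_sum hfb
  have hrinj : ∀ x ∈ v, ∀ y ∈ v, rank x = rank y → x = y := by
    intro x hx y hy hxy
    rcases lt_trichotomy x y with h | h | h
    · exact absurd hxy (ne_of_lt (hrankmono x hx y hy h))
    · exact h
    · exact absurd hxy.symm (ne_of_lt (hrankmono y hy x hx h))
  have hchain2 : ∑ m ∈ v, b (rank m) = ∑ k ∈ v.image rank, b k := (Finset.sum_image hrinj).symm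
  have hchain3 : ∑ k ∈ v.image rank, b k ≤ ∑' k : ℕ, b k :=
    Summable.sum_le_tsum _ (fun i _ => hb_nonneg i) hbsummable
  have hsplit := (Summable.sum_add_tsum_nat_add (K+1) hbsummable).symm
  have hhead : ∑ k ∈ Finset.range (K+1), b k = ((K:ℝ)+1) * Real.log (1 + r^2) := by
    have hc : ∀ k ∈ Finset.range (K+1), b k = Real.log (1 + r^2) := by
      intro k hk
      rw [hb]
      have : ¬ (K + 1 ≤ k) := by have := Finset.mem_range.mp hk; omega
      simp only [this, if_false]
    rw [Finset.sum_congr rfl hc, Finset.sum_const, Finset.card_range, nsmul_eq_mul]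
    push_cast
    ring
  have htail : ∑' k : ℕ, b (k + (K+1)) ≤ π * (β * r) := by
    calc ∑' k : ℕ, b (k + (K+1)) = ∑' k : ℕ, Real.log (1 + (β*r)^2 / ((k:ℝ)+1)^2) :=
          tsum_congr hbshift
      _ ≤ π * (β * r) := aux_KL (mul_nonneg hβ.le hr)
  calc ∑ t ∈ u, Real.log (1 + r^2 / (((t:ℕ)):ℝ)^2) = ∑ m ∈ v, f m := hveq
    _ ≤ ∑ m ∈ v, b (rank m) := hchain1
    _ = ∑ k ∈ v.image rank, b k := hchain2
    _ ≤ ∑' k : ℕ, b k := hchain3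
    _ = ∑ k ∈ Finset.range (K+1), b k + ∑' k : ℕ, b (k + (K+1)) := hsplit
    _ ≤ ((K:ℝ)+1) * Real.log (1 + r^2) + π * (β * r) := by
        rw [hhead]; linarith [htail]

lemma aux_factor_norm (z : ℂ) (n : ℕ) :
    ‖(1:ℂ) - z^2/((n:ℕ):ℂ)^2‖ ≤ 1 + ‖z‖^2/((n:ℕ):ℝ)^2 := by
  calc ‖(1:ℂ) - z^2/((n:ℕ):ℂ)^2‖ ≤ ‖(1:ℂ)‖ + ‖z^2/((n:ℕ):ℂ)^2‖ := norm_sub_le _ _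
    _ = 1 + ‖z‖^2/((n:ℕ):ℝ)^2 := by
        rw [norm_one, norm_div, norm_pow, norm_pow, Complex.norm_natCast]

lemma aux_prod_norm_le {S : Set ℕ} (N : Finset S) (z : ℂ) :
    ‖∏ t ∈ N, ((1:ℂ) - z^2/((t:ℕ):ℂ)^2)‖ ≤ Real.exp (∑ t ∈ N, ‖z‖^2/((t:ℕ):ℝ)^2) := by
  calc ‖∏ t ∈ N, ((1:ℂ) - z^2/((t:ℕ):ℂ)^2)‖ ≤ ∏ t ∈ N, ‖(1:ℂ) - z^2/((t:ℕ):ℂ)^2‖ :=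
        Finset.norm_prod_le N (fun t => (1:ℂ) - z^2/((t:ℕ):ℂ)^2)
    _ ≤ ∏ t ∈ N, Real.exp (‖z‖^2/((t:ℕ):ℝ)^2) := by
        apply Finset.prod_le_prod (fun t _ => norm_nonneg _)
        intro t _
        calc ‖(1:ℂ) - z^2/((t:ℕ):ℂ)^2‖ ≤ 1 + ‖z‖^2/((t:ℕ):ℝ)^2 := aux_factor_norm z t
          _ ≤ Real.exp (‖z‖^2/((t:ℕ):ℝ)^2) := by
              linarith [Real.add_one_le_exp (‖z‖^2/((t:ℕ):ℝ)^2)]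
    _ = Real.exp (∑ t ∈ N, ‖z‖^2/((t:ℕ):ℝ)^2) := (Real.exp_sum _ _).symm

lemma aux_prod_sub_one {S : Set ℕ} (N : Finset S) (z : ℂ) :
    ‖∏ t ∈ N, ((1:ℂ) - z^2/((t:ℕ):ℂ)^2) - 1‖
      ≤ Real.exp (∑ t ∈ N, ‖z‖^2/((t:ℕ):ℝ)^2) - 1 := by
  classical
  induction N using Finset.induction_on with
  | empty => simp
  | @insert a N ha ih =>
    rw [Finset.prod_insert ha, Finset.sum_insert ha]
    set p := ∏ t ∈ N, ((1:ℂ) - z^2/((t:ℕ):ℂ)^2) with hp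
    set s := ∑ t ∈ N, ‖z‖^2/((t:ℕ):ℝ)^2 with hs
    set x := ‖z‖^2/(((a:ℕ)):ℝ)^2 with hx
    have hx0 : 0 ≤ x := by positivity
    have hs0 : 0 ≤ s := Finset.sum_nonneg (fun t _ => by positivity)
    have hpnorm : ‖p‖ ≤ Real.exp s := aux_prod_norm_le N z
    have hw : ‖z^2/((a:ℕ):ℂ)^2‖ ≤ x := by
      rw [hx, norm_div, norm_pow, norm_pow, Complex.norm_natCast]
    have key : ((1:ℂ) - z^2/((a:ℕ):ℂ)^2) * p - 1 = (p - 1) - (z^2/((a:ℕ):ℂ)^2) * p := by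
      ring
    rw [key]
    calc ‖(p - 1) - (z^2/((a:ℕ):ℂ)^2) * p‖
        ≤ ‖p - 1‖ + ‖(z^2/((a:ℕ):ℂ)^2) * p‖ := norm_sub_le _ _
      _ ≤ (Real.exp s - 1) + x * Real.exp s := by
          rw [norm_mul]
          have h2 : ‖z^2/((a:ℕ):ℂ)^2‖ * ‖p‖ ≤ x * Real.exp s :=
            mul_le_mul hw hpnorm (norm_nonneg _) hx0
          linarith [ih]
      _ ≤ Real.exp (x + s) - 1 := by
          rw [Real.exp_add]
          nlinarith [Real.add_one_le_exp x, Real.exp_pos s, Real.exp_pos x]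

lemma aux_summable_c (S : Set ℕ) : Summable (fun t : S => 1/((t:ℕ):ℝ)^2) := by
  have hbase : Summable (fun n : ℕ => 1/(n:ℝ)^2) := Real.summable_one_div_nat_pow.mpr one_lt_two
  exact hbase.subtype S

lemma aux_ucauchy (S : Set ℕ) {R : ℝ} (hR : 0 < R) :
    UniformCauchySeqOn (fun (N : Finset S) (z : ℂ) => ∏ t ∈ N, ((1:ℂ) - z^2/((t:ℕ):ℂ)^2)) atTop
      (Metric.closedBall 0 R) := by
  classical
  rw [Metric.uniformCauchySeqOn_iff]
  intro ε hε
  set c : S → ℝ := fun t => 1/((t:ℕ):ℝ)^2 with hc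
  have hcs : Summable c := aux_summable_c S
  have hcpos : ∀ t, 0 ≤ c t := fun t => by positivity
  set Sg : ℝ := ∑' t : S, c t with hSg
  have hSg0 : 0 ≤ Sg := tsum_nonneg hcpos
  set D : ℝ := Real.exp (R^2*Sg) * Real.exp 1 * R^2 + 1 with hD
  have hD0 : 0 < D := by positivity
  have hD1 : Real.exp (R^2*Sg) * Real.exp 1 * R^2 ≤ D := by rw [hD]; linarith
  set ε₁ : ℝ := min (1/R^2) (ε/(3*D)) with hε₁
  have hε₁0 : 0 < ε₁ := lt_min (by positivity) (by positivity)
  have hε₁a : ε₁ ≤ 1/R^2 := min_le_left _ _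
  have hε₁b : ε₁ ≤ ε/(3*D) := min_le_right _ _
  have hmem : Set.Ioo (-ε₁) ε₁ ∈ nhds (0:ℝ) :=
    Ioo_mem_nhds (by linarith) hε₁0
  obtain ⟨T, hT⟩ := summable_iff_vanishing.mp hcs _ hmem
  refine ⟨T, fun M hM N hN z hz => ?_⟩
  have hzR : ‖z‖ ≤ R := by
    rw [Metric.mem_closedBall, dist_zero_right] at hz
    exact hz
  -- key estimate for any superset of T
  have key : ∀ M' : Finset S, T ⊆ M' →
      dist (∏ t ∈ M', ((1:ℂ) - z^2/((t:ℕ):ℂ)^2)) (∏ t ∈ T, ((1:ℂ) - z^2/((t:ℕ):ℂ)^2)) ≤ ε/3 := by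
    intro M' hTM
    have hprod : (∏ t ∈ M' \ T, ((1:ℂ) - z^2/((t:ℕ):ℂ)^2)) * ∏ t ∈ T, ((1:ℂ) - z^2/((t:ℕ):ℂ)^2)
        = ∏ t ∈ M', ((1:ℂ) - z^2/((t:ℕ):ℂ)^2) := Finset.prod_sdiff hTM
    rw [dist_eq_norm, ← hprod]
    have hid : (∏ t ∈ M' \ T, ((1:ℂ) - z^2/((t:ℕ):ℂ)^2)) * (∏ t ∈ T, ((1:ℂ) - z^2/((t:ℕ):ℂ)^2))
        - ∏ t ∈ T, ((1:ℂ) - z^2/((t:ℕ):ℂ)^2)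
        = (∏ t ∈ T, ((1:ℂ) - z^2/((t:ℕ):ℂ)^2))
          * ((∏ t ∈ M' \ T, ((1:ℂ) - z^2/((t:ℕ):ℂ)^2)) - 1) := by ring
    rw [hid, norm_mul]
    -- bound each piece
    have hsumT : ∑ t ∈ T, ‖z‖^2/((t:ℕ):ℝ)^2 ≤ R^2 * Sg := by
      have h1 : ∀ t ∈ T, ‖z‖^2/((t:ℕ):ℝ)^2 ≤ R^2 * c t := by
        intro t _
        rw [hc]
        have : ‖z‖^2 ≤ R^2 := by nlinarith [norm_nonneg z]
        rw [div_eq_mul_one_div]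
        exact mul_le_mul_of_nonneg_right this (by positivity)
      calc ∑ t ∈ T, ‖z‖^2/((t:ℕ):ℝ)^2 ≤ ∑ t ∈ T, R^2 * c t := Finset.sum_le_sum h1
        _ = R^2 * ∑ t ∈ T, c t := by rw [Finset.mul_sum]
        _ ≤ R^2 * Sg := by
            apply mul_le_mul_of_nonneg_left _ (by positivity)
            exact Summable.sum_le_tsum T (fun t _ => hcpos t) hcs
    have hnormT : ‖∏ t ∈ T, ((1:ℂ) - z^2/((t:ℕ):ℂ)^2)‖ ≤ Real.exp (R^2*Sg) :=
      le_trans (aux_prod_norm_le T z) (Real.exp_le_exp.mpr hsumT)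
    have hdisj : Disjoint (M' \ T) T := Finset.sdiff_disjoint
    have hvan := hT (M' \ T) hdisj
    have hsmall : ∑ t ∈ M' \ T, c t < ε₁ := hvan.2
    have hsum2 : ∑ t ∈ M' \ T, ‖z‖^2/((t:ℕ):ℝ)^2 ≤ R^2 * ε₁ := by
      have h1 : ∀ t ∈ M' \ T, ‖z‖^2/((t:ℕ):ℝ)^2 ≤ R^2 * c t := by
        intro t _
        rw [hc]
        have : ‖z‖^2 ≤ R^2 := by nlinarith [norm_nonneg z]
        rw [div_eq_mul_one_div]
        exact mul_le_mul_of_nonneg_right this (by positivity)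
      calc ∑ t ∈ M' \ T, ‖z‖^2/((t:ℕ):ℝ)^2 ≤ ∑ t ∈ M' \ T, R^2 * c t := Finset.sum_le_sum h1
        _ = R^2 * ∑ t ∈ M' \ T, c t := by rw [Finset.mul_sum]
        _ ≤ R^2 * ε₁ := mul_le_mul_of_nonneg_left hsmall.le (by positivity)
    have hRe1 : R^2 * ε₁ ≤ 1 := by
      have := mul_le_mul_of_nonneg_left hε₁a (le_of_lt (by positivity : (0:ℝ) < R^2))
      calc R^2 * ε₁ ≤ R^2 * (1/R^2) := this
        _ = 1 := by field_simp
    set s₁ : ℝ := ∑ t ∈ M' \ T, ‖z‖^2/((t:ℕ):ℝ)^2 with hs₁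
    have hs₁0 : 0 ≤ s₁ := Finset.sum_nonneg (fun t _ => by positivity)
    have hsub1 : ‖(∏ t ∈ M' \ T, ((1:ℂ) - z^2/((t:ℕ):ℂ)^2)) - 1‖ ≤ Real.exp s₁ - 1 :=
      aux_prod_sub_one (M' \ T) z
    have hexp1 : Real.exp s₁ - 1 ≤ s₁ * Real.exp s₁ := by
      have hmul : Real.exp s₁ * Real.exp (-s₁) = 1 := by rw [← Real.exp_add]; simp
      nlinarith [Real.add_one_le_exp (-s₁), Real.exp_pos s₁, Real.exp_pos (-s₁)]
    have hexp2 : s₁ * Real.exp s₁ ≤ (R^2*ε₁) * Real.exp 1 := by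
      have h1 : Real.exp s₁ ≤ Real.exp 1 := Real.exp_le_exp.mpr (le_trans hsum2 hRe1)
      have h2 : s₁ ≤ R^2*ε₁ := hsum2
      nlinarith [Real.exp_pos s₁, Real.exp_pos (1:ℝ)]
    calc ‖∏ t ∈ T, ((1:ℂ) - z^2/((t:ℕ):ℂ)^2)‖ * ‖(∏ t ∈ M' \ T, ((1:ℂ) - z^2/((t:ℕ):ℂ)^2)) - 1‖
        ≤ Real.exp (R^2*Sg) * ((R^2*ε₁) * Real.exp 1) := by
          apply mul_le_mul hnormT (le_trans hsub1 (le_trans hexp1 hexp2)) (norm_nonneg _)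
            (Real.exp_nonneg _)
      _ = (Real.exp (R^2*Sg) * Real.exp 1 * R^2) * ε₁ := by ring
      _ ≤ D * (ε/(3*D)) := by
          apply mul_le_mul hD1 hε₁b hε₁0.le hD0.le
      _ = ε/3 := by field_simp
  calc dist (∏ t ∈ M, ((1:ℂ) - z^2/((t:ℕ):ℂ)^2)) (∏ t ∈ N, ((1:ℂ) - z^2/((t:ℕ):ℂ)^2))
      ≤ dist (∏ t ∈ M, ((1:ℂ) - z^2/((t:ℕ):ℂ)^2)) (∏ t ∈ T, ((1:ℂ) - z^2/((t:ℕ):ℂ)^2))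
        + dist (∏ t ∈ T, ((1:ℂ) - z^2/((t:ℕ):ℂ)^2)) (∏ t ∈ N, ((1:ℂ) - z^2/((t:ℕ):ℂ)^2)) :=
        dist_triangle _ _ _
    _ ≤ ε/3 + ε/3 := by
        have h1 := key M hM
        have h2 := key N hN
        rw [dist_comm] at h2
        linarith
    _ < ε := by linarith

lemma aux_multipliable (S : Set ℕ) (z : ℂ) :
    Multipliable (fun t : S => (1:ℂ) - z^2/((t:ℕ):ℂ)^2) := by
  have hR : (0:ℝ) < ‖z‖ + 1 := by positivity
  have huc := aux_ucauchy S hR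
  have hz : z ∈ Metric.closedBall (0:ℂ) (‖z‖+1) := by
    rw [Metric.mem_closedBall, dist_zero_right]; linarith
  have hcauchy : Cauchy (map (fun N : Finset S => ∏ t ∈ N, ((1:ℂ) - z^2/((t:ℕ):ℂ)^2)) atTop) := by
    rw [cauchy_map_iff]
    refine ⟨inferInstance, ?_⟩
    intro u hu
    exact (huc u hu).mono (fun mn h => h z hz)
  obtain ⟨L, hL⟩ := CompleteSpace.complete hcauchy
  exact ⟨L, hL⟩

lemma aux_tuo (S : Set ℕ) {R : ℝ} (hR : 0 < R) :
    TendstoUniformlyOn (fun (N : Finset S) (z : ℂ) => ∏ t ∈ N, ((1:ℂ) - z^2/((t:ℕ):ℂ)^2))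
      (fun z => ∏' t : S, ((1:ℂ) - z^2/((t:ℕ):ℂ)^2)) atTop (Metric.closedBall 0 R) :=
  (aux_ucauchy S hR).tendstoUniformlyOn_of_tendsto
    (fun z _ => (aux_multipliable S z).hasProd)

lemma aux_tlu (S : Set ℕ) :
    TendstoLocallyUniformly (fun (N : Finset S) (z : ℂ) => ∏ t ∈ N, ((1:ℂ) - z^2/((t:ℕ):ℂ)^2))
      (fun z => ∏' t : S, ((1:ℂ) - z^2/((t:ℕ):ℂ)^2)) atTop := by
  intro u hu x
  refine ⟨Metric.closedBall x 1, Metric.closedBall_mem_nhds x one_pos, ?_⟩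
  have hR : (0:ℝ) < ‖x‖ + 1 := by positivity
  have h := aux_tuo S hR u hu
  filter_upwards [h] with N hN y hy
  apply hN
  rw [Metric.mem_closedBall] at hy ⊢
  rw [dist_zero_right]
  calc ‖y‖ = dist y 0 := (dist_zero_right y).symm
    _ ≤ dist y x + dist x 0 := dist_triangle _ _ _
    _ ≤ 1 + ‖x‖ := by rw [dist_zero_right]; linarith
    _ = ‖x‖ + 1 := by ring

lemma aux_diff (S : Set ℕ) :
    Differentiable ℂ (fun z => ∏' t : S, ((1:ℂ) - z^2/((t:ℕ):ℂ)^2)) := by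
  rw [← differentiableOn_univ]
  apply TendstoLocallyUniformlyOn.differentiableOn
    ((aux_tlu S).tendstoLocallyUniformlyOn (s := Set.univ))
  · apply Eventually.of_forall
    intro N
    apply Differentiable.differentiableOn
    apply Differentiable.fun_finsetProd
    intro t _
    exact (differentiable_const 1).sub ((differentiable_pow 2).div_const _)
  · exact isOpen_univ

lemma aux_summable_g (S : Set ℕ) (r : ℝ) :
    Summable (fun t : S => Real.log (1 + r^2/((t:ℕ):ℝ)^2)) := by
  apply Summable.of_nonneg_of_le
    (fun t => Real.log_nonneg (by nlinarith [div_nonneg (sq_nonneg r) (sq_nonneg (((t:ℕ)):ℝ))]))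
    (fun t => ?_) ((aux_summable_c S).mul_left (r^2))
  have h1 : Real.log (1 + r^2/((t:ℕ):ℝ)^2) ≤ (1 + r^2/((t:ℕ):ℝ)^2) - 1 :=
    Real.log_le_sub_one_of_pos (by positivity)
  have h2 : r^2/((t:ℕ):ℝ)^2 = r^2 * (1/((t:ℕ):ℝ)^2) := by ring
  linarith [h2 ▸ h1]

lemma aux_F_le (S : Set ℕ) (z : ℂ) :
    ‖∏' t : S, ((1:ℂ) - z^2/((t:ℕ):ℂ)^2)‖
      ≤ Real.exp (∑' t : S, Real.log (1 + ‖z‖^2/((t:ℕ):ℝ)^2)) := by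
  have hprod := (aux_multipliable S z).hasProd
  apply le_of_tendsto (Filter.Tendsto.norm hprod)
  apply Eventually.of_forall
  intro N
  calc ‖∏ t ∈ N, ((1:ℂ) - z^2/((t:ℕ):ℂ)^2)‖ ≤ ∏ t ∈ N, ‖(1:ℂ) - z^2/((t:ℕ):ℂ)^2‖ :=
        Finset.norm_prod_le N _
    _ ≤ ∏ t ∈ N, Real.exp (Real.log (1 + ‖z‖^2/((t:ℕ):ℝ)^2)) := by
        apply Finset.prod_le_prod (fun t _ => norm_nonneg _)
        intro t _
        rw [Real.exp_log (by positivity)]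
        exact aux_factor_norm z (t:ℕ)
    _ = Real.exp (∑ t ∈ N, Real.log (1 + ‖z‖^2/((t:ℕ):ℝ)^2)) := (Real.exp_sum _ _).symm
    _ ≤ Real.exp (∑' t : S, Real.log (1 + ‖z‖^2/((t:ℕ):ℝ)^2)) := by
        apply Real.exp_le_exp.mpr
        apply Summable.sum_le_tsum N (fun t _ => Real.log_nonneg (by
          nlinarith [div_nonneg (sq_nonneg ‖z‖) (sq_nonneg (((t:ℕ)):ℝ))]))
          (aux_summable_g S ‖z‖)

lemma aux_log_sq_le {r c : ℝ} (hr : 0 ≤ r) (hc : 0 < c) :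
    Real.log (1 + r^2) ≤ 2 * (c * r + 1/c) := by
  set t := Real.sqrt r with ht
  have ht0 : 0 ≤ t := Real.sqrt_nonneg r
  have ht2 : t^2 = r := Real.sq_sqrt hr
  have h1 : 1 + r^2 ≤ (1+t)^4 := by nlinarith [sq_nonneg t, sq_nonneg (1+t)]
  have h2 : Real.log (1 + r^2) ≤ Real.log ((1+t)^4) :=
    Real.log_le_log (by positivity) h1
  have h3 : Real.log ((1+t)^4) = 4 * Real.log (1+t) := by
    rw [Real.log_pow]; push_cast; ring
  have h4 : Real.log (1+t) ≤ t := by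
    have := Real.log_le_sub_one_of_pos (show (0:ℝ) < 1 + t by linarith)
    linarith
  have h5 : 4*t ≤ 2*(c*t^2 + 1/c) := by
    have hcc : c * (1/c) = 1 := by field_simp
    nlinarith [sq_nonneg (c*t-1), hcc, hc, mul_pos hc hc]
  calc Real.log (1 + r^2) ≤ 4 * Real.log (1+t) := by rw [← h3]; exact h2
    _ ≤ 4 * t := by linarith
    _ ≤ 2*(c*t^2 + 1/c) := h5
    _ = 2*(c*r + 1/c) := by rw [ht2]

/-- The infinite product `∏_{t ∈ S} (1 - z²/t²)` over a measurable set `S` of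
positive integers of density `δ` converges locally uniformly to an entire
function of exponential type at most `πδ`. -/
theorem product_entire_of_density (S : Set ℕ) (δ : ℝ)
    (hS : S ⊆ {m : ℕ | 0 < m}) (hδ0 : 0 ≤ δ) (hδ1 : δ ≤ 1)
    (hd : HasDensity S δ) :
    ∃ F : ℂ → ℂ,
      TendstoLocallyUniformly
        (fun (N : Finset S) (z : ℂ) => ∏ t ∈ N, (1 - z ^ 2 / ((t : ℕ) : ℂ) ^ 2))
        F atTop ∧
      (∀ z : ℂ, F z = ∏' t : S, (1 - z ^ 2 / ((t : ℕ) : ℂ) ^ 2)) ∧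
      Differentiable ℂ F ∧
      ∀ ε > (0 : ℝ), ∃ C : ℝ, ∀ z : ℂ,
        ‖F z‖ ≤ C * Real.exp ((π * δ + ε) * ‖z‖) := by
  classical
  refine ⟨fun z => ∏' t : S, ((1:ℂ) - z ^ 2 / ((t : ℕ) : ℂ) ^ 2), aux_tlu S, fun z => rfl,
    aux_diff S, ?_⟩
  intro ε hε
  have hπ := Real.pi_pos
  set β : ℝ := δ + ε/(2*π) with hβdef
  have hβδ : δ < β := by
    have : 0 < ε/(2*π) := by positivity
    rw [hβdef]; linarith
  have hβ0 : 0 < β := lt_of_le_of_lt hδ0 hβδ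
  obtain ⟨K, hK⟩ := aux_density_bound hδ0 hd hβδ
  set c : ℝ := ε/(4*((K:ℝ)+1)) with hcdef
  have hc0 : 0 < c := by positivity
  refine ⟨Real.exp (2*((K:ℝ)+1)/c), fun z => ?_⟩
  set r : ℝ := ‖z‖ with hrdef
  have hr0 : 0 ≤ r := norm_nonneg z
  have hg : (∑' t : S, Real.log (1 + r^2/((t:ℕ):ℝ)^2))
      ≤ ((K:ℝ)+1)*Real.log (1+r^2) + π*(β*r) :=
    Summable.tsum_le_of_sum_le (aux_summable_g S r) (fun u => aux_sum_bound S hS hβ0 K hK hr0 u)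
  have hF := aux_F_le S z
  have hlog : ((K:ℝ)+1)*Real.log (1+r^2) ≤ (ε/2)*r + 2*((K:ℝ)+1)/c := by
    have hb := aux_log_sq_le hr0 hc0
    have hKpos : (0:ℝ) < (K:ℝ)+1 := by positivity
    have hcc : 2*((K:ℝ)+1)*c = ε/2 := by
      rw [hcdef]; field_simp; ring
    calc ((K:ℝ)+1)*Real.log (1+r^2) ≤ ((K:ℝ)+1)*(2*(c*r + 1/c)) :=
          mul_le_mul_of_nonneg_left hb hKpos.le
      _ = (2*((K:ℝ)+1)*c)*r + 2*((K:ℝ)+1)/c := by field_simp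
      _ = (ε/2)*r + 2*((K:ℝ)+1)/c := by rw [hcc]
  have hβr : π*(β*r) = π*δ*r + (ε/2)*r := by
    rw [hβdef]
    field_simp
  have habs : ‖∏' t : S, ((1:ℂ) - z ^ 2 / ((t : ℕ) : ℂ) ^ 2)‖
      = ‖∏' t : S, ((1:ℂ) - z ^ 2 / ((t : ℕ) : ℂ) ^ 2)‖ := rfl
  rw [habs]
  calc ‖∏' t : S, ((1:ℂ) - z ^ 2 / ((t : ℕ) : ℂ) ^ 2)‖
      ≤ Real.exp (∑' t : S, Real.log (1 + r^2/((t:ℕ):ℝ)^2)) := hF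
    _ ≤ Real.exp (2*((K:ℝ)+1)/c + (π * δ + ε) * r) := by
        apply Real.exp_le_exp.mpr
        calc (∑' t : S, Real.log (1 + r^2/((t:ℕ):ℝ)^2))
            ≤ ((K:ℝ)+1)*Real.log (1+r^2) + π*(β*r) := hg
          _ ≤ ((ε/2)*r + 2*((K:ℝ)+1)/c) + (π*δ*r + (ε/2)*r) := by
              rw [hβr]; linarith
          _ = 2*((K:ℝ)+1)/c + (π * δ + ε) * r := by ring
    _ = Real.exp (2*((K:ℝ)+1)/c) * Real.exp ((π * δ + ε) * ‖z‖) := by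
        rw [Real.exp_add, hrdef]
end

section
/- Let F(z) = ∏_{t ∈ S} (1 − z²/t²) where S is a measurable set of positive integers of density δ. Then for real y, lim_{|y|→∞} log|F(iy)|/|y| = πδ, i.e., on the imaginary axis the growth of log|F| is exactly πδ|y| + o(|y|). -/
open Filter Real

section Aux

open Set MeasureTheory

private noncomputable def cnt (S : Set ℕ) (x : ℝ) : ℝ :=
  ({m ∈ S | 1 ≤ m ∧ (m : ℝ) ≤ x}.ncard : ℝ)

private lemma cnt_finite (S : Set ℕ) (x : ℝ) : {m ∈ S | 1 ≤ m ∧ (m : ℝ) ≤ x}.Finite := by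
  apply (Set.finite_Icc 1 ⌊x⌋₊).subset
  rintro m ⟨-, h1, h2⟩
  exact ⟨h1, Nat.le_floor h2⟩

private lemma cnt_nonneg (S : Set ℕ) (x : ℝ) : 0 ≤ cnt S x := Nat.cast_nonneg _

private lemma cnt_mono (S : Set ℕ) : Monotone (cnt S) := by
  intro a b hab
  have h : {m ∈ S | 1 ≤ m ∧ (m : ℝ) ≤ a} ⊆ {m ∈ S | 1 ≤ m ∧ (m : ℝ) ≤ b} := by
    rintro m ⟨h1, h2, h3⟩; exact ⟨h1, h2, h3.trans hab⟩
  exact_mod_cast Nat.cast_le.mpr (Set.ncard_le_ncard h (cnt_finite S b))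

private lemma cnt_le (S : Set ℕ) {x : ℝ} (hx : 0 ≤ x) : cnt S x ≤ x := by
  have h : {m ∈ S | 1 ≤ m ∧ (m : ℝ) ≤ x} ⊆ Set.Icc 1 ⌊x⌋₊ := by
    rintro m ⟨-, h1, h2⟩; exact ⟨h1, Nat.le_floor h2⟩
  have hcard : {m ∈ S | 1 ≤ m ∧ (m : ℝ) ≤ x}.ncard ≤ ⌊x⌋₊ := by
    calc {m ∈ S | 1 ≤ m ∧ (m : ℝ) ≤ x}.ncard ≤ (Set.Icc 1 ⌊x⌋₊).ncard :=
          Set.ncard_le_ncard h (Set.finite_Icc _ _)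
      _ = ⌊x⌋₊ := by
          rw [← Nat.card_coe_set_eq, Nat.card_eq_fintype_card]; simp
  calc cnt S x ≤ (⌊x⌋₊ : ℝ) := by unfold cnt; exact_mod_cast hcard
    _ ≤ x := Nat.floor_le hx

private lemma hasDeriv_aux {y x : ℝ} (hy : 0 < y) (hx : 0 < x) :
    HasDerivAt (fun x : ℝ => -Real.log (1 + y ^ 2 / x ^ 2)) (2 * y ^ 2 / (x * (x ^ 2 + y ^ 2))) x := by
  have hx2 : x ^ 2 ≠ 0 := by positivity
  have hpos : 0 < 1 + y ^ 2 / x ^ 2 := by positivity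
  have h1 : HasDerivAt (fun x : ℝ => 1 + y ^ 2 / x ^ 2)
      (y ^ 2 * (-(2 * x) / (x ^ 2) ^ 2)) x := by
    have := ((hasDerivAt_pow 2 x).inv hx2).const_mul (y ^ 2)
    simpa [div_eq_mul_inv, pow_one, Nat.cast_ofNat] using this.const_add 1
  have h2 := (h1.log hpos.ne').neg
  refine h2.congr_deriv ?_
  have hxx : x * (x ^ 2 + y ^ 2) ≠ 0 := by positivity
  field_simp

private lemma integral_log_rep' {y a : ℝ} (hy : 0 < y) (ha : 1 ≤ a) :
    ∫ x in Set.Ioi a, 2 * y ^ 2 / (x * (x ^ 2 + y ^ 2)) = Real.log (1 + y ^ 2 / a ^ 2) := by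
  have ha0 : 0 < a := lt_of_lt_of_le one_pos ha
  have hint : IntegrableOn (fun x => 2 * y ^ 2 / (x * (x ^ 2 + y ^ 2))) (Set.Ioi a) := by
    have h1 : IntegrableOn (fun x : ℝ => (2 * y ^ 2) * x ^ (-3 : ℝ)) (Set.Ioi a) :=
      (integrableOn_Ioi_rpow_of_lt (by norm_num) ha0).const_mul _
    apply h1.mono' ?_ ?_
    · apply (ContinuousOn.div continuousOn_const ?_ ?_).aestronglyMeasurable measurableSet_Ioi
      · fun_prop
      · intro x hx
        have : 0 < x := lt_trans ha0 hx
        positivity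
    · filter_upwards [ae_restrict_mem measurableSet_Ioi] with x hx
      have hx0 : 0 < x := lt_trans ha0 hx
      rw [Real.norm_eq_abs, abs_of_nonneg (by positivity)]
      rw [Real.rpow_neg hx0.le]
      rw [div_le_iff₀ (by positivity)]
      have : x ^ (3:ℝ) = x ^ 2 * x := by
        rw [show (3:ℝ) = (3:ℕ) by norm_num, Real.rpow_natCast]; ring
      have hle : x ^ 2 * x ≤ (x * (x ^ 2 + y ^ 2)) := by nlinarith [sq_nonneg y]
      calc 2 * y ^ 2 = 2 * y ^ 2 * (x ^ (3:ℝ))⁻¹ * x ^ (3:ℝ) := by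
            field_simp
        _ ≤ 2 * y ^ 2 * (x ^ (3:ℝ))⁻¹ * (x * (x ^ 2 + y ^ 2)) := by
            apply mul_le_mul_of_nonneg_left _ (by positivity)
            rw [this]; exact hle
  have hderiv : ∀ x ∈ Set.Ioi a, HasDerivAt (fun x : ℝ => -Real.log (1 + y ^ 2 / x ^ 2))
      (2 * y ^ 2 / (x * (x ^ 2 + y ^ 2))) x := fun x hx => hasDeriv_aux hy (lt_trans ha0 hx)
  have hlim : Tendsto (fun x : ℝ => -Real.log (1 + y ^ 2 / x ^ 2)) atTop (nhds 0) := by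
    have h1 : Tendsto (fun x : ℝ => 1 + y ^ 2 / x ^ 2) atTop (nhds 1) := by
      have : Tendsto (fun x : ℝ => y ^ 2 / x ^ 2) atTop (nhds 0) := by
        apply Tendsto.div_atTop tendsto_const_nhds
        exact tendsto_pow_atTop (by norm_num)
      simpa using tendsto_const_nhds.add this
    have := (Real.continuousAt_log one_ne_zero).tendsto.comp h1
    simp only [Real.log_one] at this
    simpa using this.neg
  have hcont : ContinuousWithinAt (fun x : ℝ => -Real.log (1 + y ^ 2 / x ^ 2)) (Set.Ici a) a :=
    (hasDeriv_aux hy ha0).continuousAt.continuousWithinAt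
  rw [integral_Ioi_of_hasDerivAt_of_tendsto hcont hderiv hint hlim]
  simp

private lemma summable_sq (S : Set ℕ) (y : ℝ) :
    Summable (fun t : S => y ^ 2 / ((t : ℕ) : ℝ) ^ 2) := by
  have h : Summable (fun n : ℕ => y ^ 2 * (1 / (n : ℝ) ^ 2)) :=
    (Real.summable_one_div_nat_pow.mpr one_lt_two).mul_left _
  apply (h.subtype S).congr
  intro t
  exact mul_one_div _ _

private lemma summable_log' (S : Set ℕ) (y : ℝ) :
    Summable (fun t : S => Real.log (1 + y ^ 2 / ((t : ℕ) : ℝ) ^ 2)) := by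
  apply Summable.of_nonneg_of_le ?_ ?_ (summable_sq S y)
  · intro t
    apply Real.log_nonneg
    have : (0:ℝ) ≤ y ^ 2 / ((t : ℕ) : ℝ) ^ 2 := by positivity
    linarith
  · intro t
    have hpos : (0:ℝ) < 1 + y ^ 2 / ((t : ℕ) : ℝ) ^ 2 := by positivity
    have := Real.log_le_sub_one_of_pos hpos
    linarith

private lemma log_abs_F (S : Set ℕ) (F : ℂ → ℂ)
    (hF : ∀ z : ℂ, F z = ∏' t : S, (1 - z ^ 2 / ((t : ℕ) : ℂ) ^ 2)) (y : ℝ) :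
    Real.log (‖F (y * Complex.I)‖)
      = ∑' t : S, Real.log (1 + y ^ 2 / ((t : ℕ) : ℝ) ^ 2) := by
  set g : S → ℝ := fun t => 1 + y ^ 2 / ((t : ℕ) : ℝ) ^ 2 with hg
  have hpos : ∀ t : S, 0 < g t := fun t => by
    have : (0:ℝ) ≤ y ^ 2 / ((t : ℕ) : ℝ) ^ 2 := by positivity
    simp only [hg]; linarith
  have hsum : Summable fun t => Real.log (g t) := summable_log' S y
  have hprod : HasProd g (∏' t : S, g t) := by
    have := (Real.multipliable_of_summable_log hpos hsum).hasProd
    exact this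
  have hexp : Real.exp (∑' t : S, Real.log (g t)) = ∏' t : S, g t := by
    have := Real.rexp_tsum_eq_tprod hpos hsum
    exact this
  have hprodC : HasProd (fun t : S => ((g t : ℝ) : ℂ)) (((∏' t : S, g t : ℝ) : ℂ)) :=
    hprod.map Complex.ofRealHom Complex.continuous_ofReal
  have hfactor : ∀ t : S, (1 - ((y : ℂ) * Complex.I) ^ 2 / ((t : ℕ) : ℂ) ^ 2)
      = ((g t : ℝ) : ℂ) := by
    intro t
    have hI : ((y : ℂ) * Complex.I) ^ 2 = -(y : ℂ) ^ 2 := by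
      rw [mul_pow, Complex.I_sq]; ring
    simp only [hg]
    push_cast
    rw [hI]
    ring
  have hFval : F (y * Complex.I) = ((∏' t : S, g t : ℝ) : ℂ) := by
    rw [hF]
    rw [tprod_congr hfactor]
    exact hprodC.tprod_eq
  rw [hFval]
  rw [Complex.norm_real, Real.norm_eq_abs, abs_of_pos (hexp ▸ Real.exp_pos _), ← hexp, Real.log_exp]

private lemma tsum_indicator_count (S : Set ℕ) (hS : S ⊆ {m : ℕ | 0 < m}) (x c : ℝ) :
    ∑' t : S, (if ((t : ℕ) : ℝ) ≤ x then c else 0) = cnt S x * c := by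
  have hfinA : {m : ℕ | (m : ℝ) ≤ x}.Finite := by
    apply (Set.finite_Iic ⌊x⌋₊).subset
    intro m hm
    exact Nat.le_floor hm
  have hfin : {t : S | ((t : ℕ) : ℝ) ≤ x}.Finite := by
    apply Set.Finite.preimage (Subtype.val_injective.injOn) hfinA
  have himg : Subtype.val '' {t : S | ((t : ℕ) : ℝ) ≤ x} = {m ∈ S | 1 ≤ m ∧ (m : ℝ) ≤ x} := by
    ext m
    constructor
    · rintro ⟨⟨m', hm'⟩, h1, rfl⟩
      exact ⟨hm', hS hm', h1⟩
    · rintro ⟨h1, h2, h3⟩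
      exact ⟨⟨m, h1⟩, h3, rfl⟩
  have hcard : hfin.toFinset.card = {m ∈ S | 1 ≤ m ∧ (m : ℝ) ≤ x}.ncard := by
    rw [← himg, Set.ncard_image_of_injective _ Subtype.val_injective,
      Set.ncard_eq_toFinset_card _ hfin]
  rw [tsum_eq_sum (s := hfin.toFinset) (fun t ht => by
    simp only [Set.Finite.mem_toFinset, Set.mem_setOf_eq] at ht
    simp [ht])]
  rw [Finset.sum_congr rfl (fun t ht => by
    simp only [Set.Finite.mem_toFinset, Set.mem_setOf_eq] at ht
    simp [ht] : ∀ t ∈ hfin.toFinset, (if ((t : ℕ) : ℝ) ≤ x then c else 0) = c)]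
  rw [Finset.sum_const, hcard, nsmul_eq_mul, cnt]

private lemma integrableOn_g {y a : ℝ} (hy : 0 < y) (ha : 0 < a) :
    IntegrableOn (fun x => 2 * y ^ 2 / (x * (x ^ 2 + y ^ 2))) (Set.Ioi a) := by
  have h1 : IntegrableOn (fun x : ℝ => (2 * y ^ 2) * x ^ (-3 : ℝ)) (Set.Ioi a) :=
    (integrableOn_Ioi_rpow_of_lt (by norm_num) ha).const_mul _
  apply h1.mono' ?_ ?_
  · apply (ContinuousOn.div continuousOn_const ?_ ?_).aestronglyMeasurable measurableSet_Ioi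
    · fun_prop
    · intro x hx
      have : 0 < x := lt_trans ha hx
      positivity
  · filter_upwards [ae_restrict_mem measurableSet_Ioi] with x hx
    have hx0 : 0 < x := lt_trans ha hx
    rw [Real.norm_eq_abs, abs_of_nonneg (by positivity), Real.rpow_neg hx0.le,
      div_le_iff₀ (by positivity)]
    have h3 : x ^ (3:ℝ) = x ^ 2 * x := by
      rw [show (3:ℝ) = (3:ℕ) by norm_num, Real.rpow_natCast]; ring
    have hle : x ^ 2 * x ≤ (x * (x ^ 2 + y ^ 2)) := by nlinarith [sq_nonneg y]
    calc 2 * y ^ 2 = 2 * y ^ 2 * (x ^ (3:ℝ))⁻¹ * x ^ (3:ℝ) := by field_simp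
      _ ≤ 2 * y ^ 2 * (x ^ (3:ℝ))⁻¹ * (x * (x ^ 2 + y ^ 2)) := by
          apply mul_le_mul_of_nonneg_left _ (by positivity)
          rw [h3]; exact hle

private lemma tsum_eq_integral (S : Set ℕ) (hS : S ⊆ {m : ℕ | 0 < m}) {y : ℝ} (hy : 0 < y) :
    ∑' t : S, Real.log (1 + y ^ 2 / ((t : ℕ) : ℝ) ^ 2)
      = ∫ x in Set.Ioi (0:ℝ), cnt S x * (2 * y ^ 2 / (x * (x ^ 2 + y ^ 2))) := by
  set μ := volume.restrict (Set.Ioi (0:ℝ)) with hμ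
  set g : ℝ → ℝ := fun x => 2 * y ^ 2 / (x * (x ^ 2 + y ^ 2)) with hgdef
  set f : S → ℝ → ℝ := fun t => Set.indicator (Set.Ici ((t : ℕ) : ℝ)) g with hfdef
  have ht1 : ∀ t : S, 1 ≤ ((t : ℕ) : ℝ) := fun t => by exact_mod_cast hS t.2
  have hgnn : ∀ x : ℝ, 0 < x → 0 ≤ g x := fun x hx => by
    simp only [hgdef]; positivity
  have hmeas_g : Measurable g := by
    apply Measurable.div measurable_const
    fun_prop
  have hrestr : ∀ t : S, μ.restrict (Set.Ici ((t : ℕ) : ℝ)) = volume.restrict (Set.Ici ((t:ℕ):ℝ)) := by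
    intro t
    have hsub : Set.Ici ((t:ℕ):ℝ) ∩ Set.Ioi 0 = Set.Ici ((t:ℕ):ℝ) := by
      apply Set.inter_eq_self_of_subset_left
      intro x hx
      simp only [Set.mem_Ici] at hx
      exact Set.mem_Ioi.mpr (by linarith [ht1 t])
    rw [hμ, Measure.restrict_restrict measurableSet_Ici, hsub]
  have hint_t : ∀ t : S, ∫ x, f t x ∂μ = Real.log (1 + y ^ 2 / ((t : ℕ) : ℝ) ^ 2) := by
    intro t
    rw [hfdef]
    rw [integral_indicator measurableSet_Ici, hrestr t, integral_Ici_eq_integral_Ioi]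
    exact integral_log_rep' hy (ht1 t)
  have hInt : ∀ t : S, Integrable (f t) μ := by
    intro t
    rw [hfdef]
    rw [integrable_indicator_iff measurableSet_Ici]
    rw [IntegrableOn, hrestr t]
    rw [← IntegrableOn, integrableOn_Ici_iff_integrableOn_Ioi]
    exact integrableOn_g hy (by linarith [ht1 t])
  have hnn : ∀ t : S, 0 ≤ᵐ[μ] f t := by
    intro t
    filter_upwards [ae_restrict_mem measurableSet_Ioi] with x hx
    rw [hfdef]
    apply Set.indicator_nonneg
    intro x' hx'
    exact hgnn x' (lt_of_lt_of_le (by linarith [ht1 t]) hx')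
  have hlint : ∀ t : S, ∫⁻ x, ‖f t x‖₊ ∂μ
      = ENNReal.ofReal (Real.log (1 + y ^ 2 / ((t : ℕ) : ℝ) ^ 2)) := by
    intro t
    rw [← hint_t t, ofReal_integral_eq_lintegral_ofReal (hInt t) (hnn t)]
    apply lintegral_congr_ae
    filter_upwards [hnn t] with x hx
    rw [← Real.enorm_eq_ofReal hx, enorm_eq_nnnorm]
  have hne : (∑' t : S, ∫⁻ x, ‖f t x‖₊ ∂μ) ≠ ⊤ := by
    simp_rw [hlint]
    rw [← ENNReal.ofReal_tsum_of_nonneg (fun t => Real.log_nonneg (by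
      have : (0:ℝ) ≤ y ^ 2 / ((t : ℕ) : ℝ) ^ 2 := by positivity
      linarith)) (summable_log' S y)]
    exact ENNReal.ofReal_ne_top
  have hmeas : ∀ t : S, AEStronglyMeasurable (f t) μ := fun t =>
    ((hmeas_g.indicator measurableSet_Ici).aestronglyMeasurable)
  have key := MeasureTheory.integral_tsum hmeas hne
  have hpt : ∫ x, (∑' t : S, f t x) ∂μ
      = ∫ x in Set.Ioi (0:ℝ), cnt S x * g x := by
    apply integral_congr_ae
    filter_upwards [ae_restrict_mem measurableSet_Ioi] with x hx
    have : ∀ t : S, f t x = if ((t : ℕ) : ℝ) ≤ x then g x else 0 := fun t => by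
      rw [hfdef]; simp [Set.indicator_apply, Set.mem_Ici]
    rw [tsum_congr this, tsum_indicator_count S hS x (g x)]
  rw [← tsum_congr hint_t, ← key, hpt]


private lemma sub_var (S : Set ℕ) {y : ℝ} (hy : 0 < y) :
    (∫ x in Set.Ioi (0:ℝ), cnt S x * (2 * y ^ 2 / (x * (x ^ 2 + y ^ 2)))) / y
      = ∫ u in Set.Ioi (0:ℝ), (cnt S (y * u) / (y * u)) * (2 / (u ^ 2 + 1)) := by
  have key := integral_comp_mul_left_Ioi
    (fun x => cnt S x * (2 * y ^ 2 / (x * (x ^ 2 + y ^ 2)))) 0 hy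
  rw [mul_zero] at key
  have hcongr : ∫ u in Set.Ioi (0:ℝ), (cnt S (y * u) / (y * u)) * (2 / (u ^ 2 + 1))
      = ∫ u in Set.Ioi (0:ℝ),
        cnt S (y * u) * (2 * y ^ 2 / ((y * u) * ((y * u) ^ 2 + y ^ 2))) := by
    apply integral_congr_ae
    filter_upwards [ae_restrict_mem measurableSet_Ioi] with u hu
    have hu0 : 0 < u := hu
    have h1 : (y * u) * ((y * u) ^ 2 + y ^ 2) ≠ 0 := by positivity
    have h2 : u ^ 2 + 1 ≠ 0 := by positivity
    field_simp
  rw [hcongr, key, smul_eq_mul, div_eq_inv_mul]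

private lemma dct (S : Set ℕ) (δ : ℝ)
    (hd : Tendsto (fun x : ℝ => cnt S x / x) atTop (nhds δ)) :
    Tendsto (fun y : ℝ => ∫ u in Set.Ioi (0:ℝ),
        (cnt S (y * u) / (y * u)) * (2 / (u ^ 2 + 1))) atTop (nhds (π * δ)) := by
  have hb : Integrable (fun u : ℝ => 2 / (u ^ 2 + 1)) (volume.restrict (Set.Ioi (0:ℝ))) := by
    have := (integrable_inv_one_add_sq.const_mul 2).restrict (s := Set.Ioi (0:ℝ))
    apply this.congr
    filter_upwards with u
    rw [div_eq_mul_inv, add_comm (u^2) 1]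
  have hcm : Measurable (cnt S) := (cnt_mono S).measurable
  have hlimit : (∫ u in Set.Ioi (0:ℝ), δ * (2 / (u ^ 2 + 1))) = π * δ := by
    rw [integral_const_mul]
    have : (∫ u in Set.Ioi (0:ℝ), 2 / (u ^ 2 + 1))
        = 2 * ∫ u in Set.Ioi (0:ℝ), (1 + u ^ 2)⁻¹ := by
      rw [← integral_const_mul]
      apply integral_congr_ae
      filter_upwards with u
      rw [div_eq_mul_inv, add_comm (u^2) 1]
    rw [this, integral_Ioi_inv_one_add_sq, arctan_zero]
    ring
  rw [← hlimit]
  apply tendsto_integral_filter_of_dominated_convergence (fun u => 2 / (u ^ 2 + 1))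
  · filter_upwards with y
    apply Measurable.aestronglyMeasurable
    apply Measurable.mul
    · exact (hcm.comp (measurable_id.const_mul y)).div (measurable_id.const_mul y)
    · exact measurable_const.div (by fun_prop)
  · filter_upwards [eventually_ge_atTop (1:ℝ)] with y hy1
    filter_upwards [ae_restrict_mem measurableSet_Ioi] with u hu
    have hu0 : 0 < u := hu
    have hyu : 0 < y * u := by positivity
    have hfrac : cnt S (y * u) / (y * u) ≤ 1 :=
      (div_le_one hyu).mpr (cnt_le S hyu.le)
    have hfracnn : 0 ≤ cnt S (y * u) / (y * u) := div_nonneg (cnt_nonneg S _) hyu.le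
    have hcnn : (0:ℝ) ≤ 2 / (u ^ 2 + 1) := by positivity
    rw [Real.norm_eq_abs, abs_of_nonneg (mul_nonneg hfracnn hcnn)]
    calc cnt S (y * u) / (y * u) * (2 / (u ^ 2 + 1)) ≤ 1 * (2 / (u ^ 2 + 1)) :=
          mul_le_mul_of_nonneg_right hfrac hcnn
      _ = 2 / (u ^ 2 + 1) := one_mul _
  · exact hb
  · filter_upwards [ae_restrict_mem measurableSet_Ioi] with u hu
    have hu0 : 0 < u := hu
    have h1 : Tendsto (fun y : ℝ => y * u) atTop atTop :=
      Tendsto.atTop_mul_const hu0 tendsto_id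
    exact (hd.comp h1).mul_const _

end Aux

/-- For `F(z) = ∏_{t ∈ S} (1 - z²/t²)` with `S` of density `δ`, the growth of
`log |F|` on the imaginary axis is exactly `πδ|y| + o(|y|)`. -/
theorem log_abs_product_on_imaginary_axis (S : Set ℕ) (δ : ℝ)
    (hS : S ⊆ {m : ℕ | 0 < m}) (hd : HasDensity S δ)
    (F : ℂ → ℂ)
    (hF : ∀ z : ℂ, F z = ∏' t : S, (1 - z ^ 2 / ((t : ℕ) : ℂ) ^ 2)) :
    Tendsto (fun y : ℝ => Real.log (‖F (y * Complex.I)‖) / |y|)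
      atTop (nhds (π * δ)) ∧
    Tendsto (fun y : ℝ => Real.log (‖F (y * Complex.I)‖) / |y|)
      atBot (nhds (π * δ)) := by
  have hd' : Tendsto (fun x : ℝ => cnt S x / x) atTop (nhds δ) := hd
  have htop : Tendsto (fun y : ℝ => Real.log (‖F (y * Complex.I)‖) / |y|)
      atTop (nhds (π * δ)) := by
    apply Tendsto.congr' ?_ (dct S δ hd')
    filter_upwards [eventually_gt_atTop (0:ℝ)] with y hy
    rw [← sub_var S hy, ← tsum_eq_integral S hS hy, ← log_abs_F S F hF y, abs_of_pos hy]
  refine ⟨htop, ?_⟩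
  have hsymm : ∀ y : ℝ,
      Real.log (‖F ((-y : ℝ) * Complex.I)‖) / |(-y : ℝ)|
        = Real.log (‖F (y * Complex.I)‖) / |y| := by
    intro y
    have hFeq : F ((-y : ℝ) * Complex.I) = F (y * Complex.I) := by
      rw [hF, hF]
      apply tprod_congr
      intro t
      push_cast
      ring_nf
    rw [hFeq, abs_neg]
  have := htop.comp tendsto_neg_atBot_atTop
  apply this.congr
  intro y
  exact hsymm y
end
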